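/- The cumulative distribution function of the standard normal distribution, Φ(a) = ∫_{-∞}^a (1/√(2π)) exp(-ν²/2) dν, is a log-concave function on the real line. -/

import Mathlib

open MeasureTheory Set Filter

noncomputable def φg : ℝ → ℝ := fun x => (1 / Real.sqrt (2 * Real.pi)) * Real.exp (-x ^ 2 / 2)

noncomputable def Φg : ℝ → ℝ := fun a => ∫ ν in Set.Iic a, φg ν

lemma φg_pos (x : ℝ) : 0 < φg x := by
  unfold φg
  have h : 0 < Real.sqrt (2 * Real.pi) := Real.sqrt_pos.2 (by positivity)
  positivity

lemma φg_cont : Continuous φg := by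
  unfold φg
  fun_prop

lemma φg_integrable : Integrable φg := by
  have h : Integrable (fun x : ℝ => Real.exp (-(1/2 : ℝ) * x ^ 2)) :=
    integrable_exp_neg_mul_sq (by norm_num)
  have h2 := h.const_mul (1 / Real.sqrt (2 * Real.pi))
  refine h2.congr (Filter.Eventually.of_forall fun x => ?_)
  simp only [φg]
  rw [show (-x ^ 2 / 2 : ℝ) = -(1/2 : ℝ) * x ^ 2 by ring]

lemma xφg_integrable : Integrable (fun x => x * φg x) := by
  have h : Integrable (fun x : ℝ => x * Real.exp (-(1/2 : ℝ) * x ^ 2)) :=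
    integrable_mul_exp_neg_mul_sq (by norm_num)
  have h2 := h.const_mul (1 / Real.sqrt (2 * Real.pi))
  refine h2.congr (Filter.Eventually.of_forall fun x => ?_)
  simp only [φg]
  rw [show (-x ^ 2 / 2 : ℝ) = -(1/2 : ℝ) * x ^ 2 by ring]
  ring

lemma φg_hasDeriv (a : ℝ) : HasDerivAt φg (-a * φg a) a := by
  have h1 : HasDerivAt (fun x : ℝ => -x ^ 2 / 2) (-a) a := by
    have h := ((hasDerivAt_pow 2 a).neg.div_const 2)
    refine h.congr_deriv ?_
    simp
    ring
  have h2 := h1.exp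
  have h3 := h2.const_mul (1 / Real.sqrt (2 * Real.pi))
  refine h3.congr_deriv ?_
  simp only [φg]
  ring

lemma Φg_pos (a : ℝ) : 0 < Φg a := by
  unfold Φg
  rw [setIntegral_pos_iff_support_of_nonneg_ae
    (Filter.Eventually.of_forall fun x => (φg_pos x).le) φg_integrable.integrableOn]
  have hs : Function.support φg = Set.univ := by
    ext x; simp [Function.mem_support, (φg_pos x).ne']
  rw [hs, Set.univ_inter, Real.volume_Iic]
  exact ENNReal.zero_lt_top

lemma Φg_hasDeriv (a : ℝ) : HasDerivAt Φg (φg a) a := by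
  have key : Φg = fun u => Φg 0 + ∫ x in (0:ℝ)..u, φg x := by
    funext u
    rw [← intervalIntegral.integral_Iic_sub_Iic φg_integrable.integrableOn φg_integrable.integrableOn]
    simp only [Φg]
    ring
  rw [key]
  have hd : HasDerivAt (fun u => ∫ x in (0:ℝ)..u, φg x) (φg a) a :=
    intervalIntegral.integral_hasDerivAt_right φg_integrable.intervalIntegrable
      φg_cont.aestronglyMeasurable.stronglyMeasurableAtFilter φg_cont.continuousAt
  exact hd.const_add _

lemma φg_tendsto_atBot : Tendsto φg atBot (nhds 0) := by
  have h1 : Tendsto (fun x : ℝ => x ^ 2) atBot atTop := by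
    have ha : Tendsto (fun x : ℝ => x ^ 2) atTop atTop := tendsto_pow_atTop (by norm_num)
    have hb : Tendsto (Neg.neg : ℝ → ℝ) atBot atTop := tendsto_neg_atBot_atTop
    refine (ha.comp hb).congr fun x => ?_
    simp [Function.comp]
  have h2 : Tendsto (fun x : ℝ => -x ^ 2 / 2) atBot atBot := by
    apply Tendsto.atBot_div_const (by norm_num : (0:ℝ) < 2)
    exact tendsto_neg_atTop_atBot.comp h1
  have h3 : Tendsto (fun x : ℝ => Real.exp (-x ^ 2 / 2)) atBot (nhds 0) :=
    Real.tendsto_exp_atBot.comp h2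
  have h4 := h3.const_mul (1 / Real.sqrt (2 * Real.pi))
  rw [mul_zero] at h4
  exact h4

lemma xφg_integral (a : ℝ) : ∫ x in Set.Iic a, x * φg x = -φg a := by
  have hderiv : ∀ x ∈ Set.Iic a, HasDerivAt (fun y => -φg y) (x * φg x) x := by
    intro x _
    have h := (φg_hasDeriv x).neg
    refine h.congr_deriv ?_
    ring
  have htend : Tendsto (fun y => -φg y) atBot (nhds 0) := by
    have := φg_tendsto_atBot.neg
    simpa using this
  have h := integral_Iic_of_hasDerivAt_of_tendsto' hderiv xφg_integrable.integrableOn htend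
  simpa using h

lemma mills (a : ℝ) : -a * Φg a ≤ φg a := by
  rcases le_or_gt 0 a with ha | ha
  · nlinarith [φg_pos a, Φg_pos a]
  · have key : Φg a ≤ ∫ x in Set.Iic a, (1/a) * (x * φg x) := by
      unfold Φg
      apply setIntegral_mono_on φg_integrable.integrableOn
        (xφg_integrable.const_mul (1/a)).integrableOn measurableSet_Iic
      intro x hx
      have hx' : x ≤ a := hx
      have h1 : 1 ≤ x / a := by
        rw [le_div_iff_of_neg ha]
        linarith
      have h2 : (1/a) * (x * φg x) = (x/a) * φg x := by ring
      rw [h2]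
      nlinarith [φg_pos x]
    rw [integral_const_mul, xφg_integral] at key
    have hinv : a * (1/a) = 1 := mul_one_div_cancel (ne_of_lt ha)
    nlinarith [mul_le_mul_of_nonneg_left key (by linarith : (0:ℝ) ≤ -a), φg_pos a]

/-- The standard normal CDF is log-concave on ℝ. -/
theorem stmt0 (Φ : ℝ → ℝ)
    (hΦ : ∀ a, Φ a = ∫ ν in Set.Iic a,
      (1 / Real.sqrt (2 * Real.pi)) * Real.exp (-ν ^ 2 / 2)) :
    ConcaveOn ℝ Set.univ (fun a => Real.log (Φ a)) := by
  have hΦg : Φ = Φg := funext fun a => hΦ a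
  rw [hΦg]
  have hlog : ∀ x, HasDerivAt (fun a => Real.log (Φg a)) (φg x / Φg x) x :=
    fun x => (Φg_hasDeriv x).log (Φg_pos x).ne'
  apply concaveOn_of_hasDerivWithinAt2_nonpos (f' := fun x => φg x / Φg x)
    (f'' := fun x => ((-x * φg x) * Φg x - φg x * φg x) / (Φg x) ^ 2) convex_univ
  · exact Continuous.continuousOn (continuous_iff_continuousAt.2 fun x => (hlog x).continuousAt)
  · intro x _
    exact (hlog x).hasDerivWithinAt
  · intro x _
    exact ((φg_hasDeriv x).div (Φg_hasDeriv x) (Φg_pos x).ne').hasDerivWithinAt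
  · intro x _
    apply div_nonpos_of_nonpos_of_nonneg
    · nlinarith [mul_le_mul_of_nonneg_right (mills x) (φg_pos x).le]
    · positivity
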